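/- Let Φ : ℝ² × ℝ → ℂ be continuously differentiable, K-quasiperiodic, with Φ and its in-plane gradient ∇ₓΦ square-integrable on Ω × ℝ, and suppose Φ(R_{2π/3}⁻¹ x, z) = ω Φ(x, z) for all (x,z), where ω := e^{2πi/3}. Then ∫_{Ω×ℝ} conj(Φ(x,z)) · (−i ∇ₓΦ)(x,z) dx dz = (0, 0) in ℂ². The same conclusion holds if instead Φ(R_{2π/3}⁻¹ x, z) = ω̄ Φ(x, z). -/

import Mathlib

noncomputable section

open MeasureTheory Real Complex

abbrev Pt : Type := ℝ × ℝ

/-- Euclidean dot product on ℝ². -/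
def dot (v w : Pt) : ℝ := v.1 * w.1 + v.2 * w.2

/-- The matrix J acting by J(x₁,x₂) = (x₂, −x₁). -/
def Jmat (v : Pt) : Pt := (v.2, -v.1)

/-- Rotation of ℝ² by angle θ. -/
def rotA (θ : ℝ) (v : Pt) : Pt :=
  (Real.cos θ * v.1 - Real.sin θ * v.2, Real.sin θ * v.1 + Real.cos θ * v.2)

/-- Lattice vector a₁ = a₀(1/2, −√3/2). -/
def av1 (a0 : ℝ) : Pt := (a0 / 2, -(Real.sqrt 3 * a0 / 2))

/-- Lattice vector a₂ = a₀(1/2, √3/2). -/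
def av2 (a0 : ℝ) : Pt := (a0 / 2, Real.sqrt 3 * a0 / 2)

/-- The graphene lattice 𝕃 = ℤa₁ + ℤa₂. -/
def lat (a0 : ℝ) : AddSubgroup Pt := AddSubgroup.closure {av1 a0, av2 a0}

/-- The moiré lattice 𝕃_M = J𝕃. -/
def latM (a0 : ℝ) : AddSubgroup Pt := AddSubgroup.closure {Jmat (av1 a0), Jmat (av2 a0)}

/-- Dual basis vector a₁*. -/
def as1 (a0 : ℝ) : Pt := (2 * π / a0, -(2 * π / (Real.sqrt 3 * a0)))

/-- Dual basis vector a₂*. -/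
def as2 (a0 : ℝ) : Pt := (2 * π / a0, 2 * π / (Real.sqrt 3 * a0))

/-- The Dirac point K = (a₁* + a₂*)/3. -/
def Kpt (a0 : ℝ) : Pt := (3 : ℝ)⁻¹ • (as1 a0 + as2 a0)

/-- A dual lattice vector G = m₁a₁* + m₂a₂*. -/
def dualVec (a0 : ℝ) (m : ℤ × ℤ) : Pt := (m.1 : ℝ) • as1 a0 + (m.2 : ℝ) • as2 a0

/-- 𝕃-periodicity in the first variable. -/
def LPeriodic (a0 : ℝ) (f : Pt → ℝ → ℂ) : Prop :=
  ∀ R ∈ lat a0, ∀ (x : Pt) (z : ℝ), f (x + R) z = f x z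

/-- K-quasiperiodicity in the first variable. -/
def KQuasiperiodic (a0 : ℝ) (Φ : Pt → ℝ → ℂ) : Prop :=
  ∀ R ∈ lat a0, ∀ (x : Pt) (z : ℝ),
    Φ (x + R) z = Complex.exp (Complex.I * (dot (Kpt a0) R : ℂ)) * Φ x z

/-- ω = e^{2πi/3}. -/
def ωc : ℂ := Complex.exp (2 * Real.pi * Complex.I / 3)

/-- The integrand of ((f,g))_d^{ηη'}(X). -/
def braFn (d η η' : ℝ) (f g : Pt → ℝ → ℂ) (X : Pt) (p : Pt × ℝ) : ℂ :=
  (starRingEnd ℂ) (f (p.1 - (η / 2) • Jmat X) (p.2 - η * d / 2)) *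
    g (p.1 - (η' / 2) • Jmat X) (p.2 - η' * d / 2)

/-- ((f,g))_d^{ηη'}(X), the interlayer pairing. -/
def bra (d : ℝ) (Ω : Set Pt) (η η' : ℝ) (f g : Pt → ℝ → ℂ) (X : Pt) : ℂ :=
  ∫ p in Ω ×ˢ (Set.univ : Set ℝ), braFn d η η' f g X p

/-- In-plane partial derivative ∂/∂x₁. -/
def dX1 (f : Pt → ℝ → ℂ) (x : Pt) (z : ℝ) : ℂ :=
  fderiv ℝ (fun y => f y z) x ((1 : ℝ), (0 : ℝ))

/-- In-plane partial derivative ∂/∂x₂. -/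
def dX2 (f : Pt → ℝ → ℂ) (x : Pt) (z : ℝ) : ℂ :=
  fderiv ℝ (fun y => f y z) x ((0 : ℝ), (1 : ℝ))

namespace S13

def rotL (θ : ℝ) : Pt →ₗ[ℝ] Pt :=
  Matrix.toLin (Module.Basis.finTwoProd ℝ) (Module.Basis.finTwoProd ℝ)
    !![Real.cos θ, -Real.sin θ; Real.sin θ, Real.cos θ]

lemma rotL_apply (θ : ℝ) (v : Pt) : rotL θ v = rotA θ v := by
  rw [rotL, Matrix.toLin_finTwoProd_apply]
  unfold rotA
  exact Prod.ext (by ring) (by ring)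

lemma rotL_det (θ : ℝ) : LinearMap.det (rotL θ) = 1 := by
  rw [rotL, ← LinearMap.det_toMatrix (Module.Basis.finTwoProd ℝ), LinearMap.toMatrix_toLin,
    Matrix.det_fin_two_of]
  nlinarith [Real.sin_sq_add_cos_sq θ]

lemma rotA_continuous (θ : ℝ) : Continuous (rotA θ) := by
  unfold rotA; fun_prop

lemma rotA_mp (θ : ℝ) : MeasurePreserving (rotA θ) (volume : Measure Pt) volume := by
  have hd : LinearMap.det (rotL θ) ≠ 0 := by rw [rotL_det]; norm_num
  refine ⟨(rotA_continuous θ).measurable, ?_⟩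
  have hc : ⇑(rotL θ) = rotA θ := funext (rotL_apply θ)
  rw [← hc, Measure.map_linearMap_addHaar_eq_smul_addHaar volume hd, rotL_det]
  simp

lemma rotA_rotA (θ φ : ℝ) (v : Pt) : rotA θ (rotA φ v) = rotA (θ + φ) v := by
  unfold rotA
  rw [Real.cos_add, Real.sin_add]
  exact Prod.ext (by ring) (by ring)

lemma rotA_zero (v : Pt) : rotA 0 v = v := by unfold rotA; simp

lemma rotA_leftinv (θ : ℝ) (v : Pt) : rotA (-θ) (rotA θ v) = v := by
  rw [rotA_rotA, neg_add_cancel, rotA_zero]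

lemma rotA_rightinv (θ : ℝ) (v : Pt) : rotA θ (rotA (-θ) v) = v := by
  rw [rotA_rotA, add_neg_cancel, rotA_zero]

def rotE (θ : ℝ) : Pt ≃ Pt where
  toFun := rotA θ
  invFun := rotA (-θ)
  left_inv v := rotA_leftinv θ v
  right_inv v := rotA_rightinv θ v

def rotME (θ : ℝ) : Pt ≃ᵐ Pt :=
  ⟨rotE θ, (rotA_continuous θ).measurable, (rotA_continuous (-θ)).measurable⟩

lemma rotA_emb (θ : ℝ) : MeasurableEmbedding (rotA θ) :=
  (rotME θ).measurableEmbedding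

lemma rotA_add (θ : ℝ) (x y : Pt) : rotA θ (x + y) = rotA θ x + rotA θ y := by
  rw [← rotL_apply, ← rotL_apply, ← rotL_apply, map_add]

lemma rotA_neg (θ : ℝ) (x : Pt) : rotA θ (-x) = -(rotA θ x) := by
  rw [← rotL_apply, ← rotL_apply, map_neg]

lemma cos23 : Real.cos (2 * π / 3) = -(1 / 2) := by
  rw [show 2 * π / 3 = π - π / 3 by ring, Real.cos_pi_sub, Real.cos_pi_div_three]

lemma sin23 : Real.sin (2 * π / 3) = Real.sqrt 3 / 2 := by
  rw [show 2 * π / 3 = π - π / 3 by ring, Real.sin_pi_sub, Real.sin_pi_div_three]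

lemma sqrt3_sq : Real.sqrt 3 ^ 2 = 3 := Real.sq_sqrt (by norm_num)

lemma S_av1 (a0 : ℝ) : rotA (-(2 * π / 3)) (av1 a0) = -(av1 a0 + av2 a0) := by
  unfold rotA av1 av2
  rw [Real.cos_neg, Real.sin_neg, cos23, sin23]
  simp only [Prod.mk_add_mk, Prod.neg_mk, Prod.mk.injEq]
  constructor <;> first | ring1 | (linear_combination (a0 / 4) * sqrt3_sq) | (linear_combination (-(a0 / 4)) * sqrt3_sq)

lemma S_av2 (a0 : ℝ) : rotA (-(2 * π / 3)) (av2 a0) = av1 a0 := by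
  unfold rotA av1 av2
  rw [Real.cos_neg, Real.sin_neg, cos23, sin23]
  simp only [Prod.mk_add_mk, Prod.neg_mk, Prod.mk.injEq]
  constructor <;> first | ring1 | (linear_combination (a0 / 4) * sqrt3_sq) | (linear_combination (-(a0 / 4)) * sqrt3_sq)

lemma T_av1 (a0 : ℝ) : rotA (2 * π / 3) (av1 a0) = av2 a0 := by
  unfold rotA av1 av2
  rw [cos23, sin23]
  simp only [Prod.mk_add_mk, Prod.neg_mk, Prod.mk.injEq]
  constructor <;> first | ring1 | (linear_combination (a0 / 4) * sqrt3_sq) | (linear_combination (-(a0 / 4)) * sqrt3_sq)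

lemma T_av2 (a0 : ℝ) : rotA (2 * π / 3) (av2 a0) = -(av1 a0 + av2 a0) := by
  unfold rotA av1 av2
  rw [cos23, sin23]
  simp only [Prod.mk_add_mk, Prod.neg_mk, Prod.mk.injEq]
  constructor <;> first | ring1 | (linear_combination (a0 / 4) * sqrt3_sq) | (linear_combination (-(a0 / 4)) * sqrt3_sq)

lemma av1_mem (a0 : ℝ) : av1 a0 ∈ lat a0 :=
  AddSubgroup.subset_closure (Set.mem_insert _ _)

lemma av2_mem (a0 : ℝ) : av2 a0 ∈ lat a0 :=
  AddSubgroup.subset_closure (Set.mem_insert_of_mem _ rfl)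

lemma rot_lat (a0 θ : ℝ) (h1 : rotA θ (av1 a0) ∈ lat a0) (h2 : rotA θ (av2 a0) ∈ lat a0) :
    ∀ v ∈ lat a0, rotA θ v ∈ lat a0 := by
  intro v hv
  induction hv using AddSubgroup.closure_induction with
  | mem x hx =>
    rcases hx with rfl | rfl
    · exact h1
    · exact h2
  | zero =>
    have : rotA θ (0 : Pt) = 0 := by rw [← rotL_apply, map_zero]
    rw [this]; exact zero_mem _
  | add x y hx hy px py => rw [rotA_add]; exact add_mem px py
  | neg x hx px => rw [rotA_neg]; exact neg_mem px

lemma S_lat (a0 : ℝ) : ∀ v ∈ lat a0, rotA (-(2 * π / 3)) v ∈ lat a0 := by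
  refine rot_lat a0 _ ?_ ?_
  · rw [S_av1]; exact neg_mem (add_mem (av1_mem a0) (av2_mem a0))
  · rw [S_av2]; exact av1_mem a0

lemma T_lat (a0 : ℝ) : ∀ v ∈ lat a0, rotA (2 * π / 3) v ∈ lat a0 := by
  refine rot_lat a0 _ ?_ ?_
  · rw [T_av1]; exact av2_mem a0
  · rw [T_av2]; exact neg_mem (add_mem (av1_mem a0) (av2_mem a0))

instance lat_countable (a0 : ℝ) : Countable ↥(lat a0) := by
  have hsub : (lat a0 : Set Pt) ⊆
      Set.range (fun mn : ℤ × ℤ => mn.1 • av1 a0 + mn.2 • av2 a0) := by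
    intro v hv
    induction hv using AddSubgroup.closure_induction with
    | mem x hx =>
      rcases hx with rfl | rfl
      · exact ⟨(1, 0), by simp⟩
      · exact ⟨(0, 1), by simp⟩
    | zero => exact ⟨(0, 0), by simp⟩
    | add x y hx hy px py =>
      obtain ⟨m, rfl⟩ := px; obtain ⟨n, rfl⟩ := py
      exact ⟨(m.1 + n.1, m.2 + n.2), by simp [add_zsmul]; ring⟩
    | neg x hx px =>
      obtain ⟨m, rfl⟩ := px
      exact ⟨(-m.1, -m.2), by simp [neg_zsmul]; ring⟩
  exact ((Set.countable_range _).mono hsub).to_subtype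

lemma FD_rot (a0 : ℝ) (Ω : Set Pt) (hΩ : IsAddFundamentalDomain (lat a0) Ω volume) :
    IsAddFundamentalDomain (lat a0) (rotA (-(2 * π / 3)) '' Ω) volume := by
  have himg : rotA (-(2 * π / 3)) '' Ω = rotA (2 * π / 3) ⁻¹' Ω := by
    ext y
    constructor
    · rintro ⟨x, hx, rfl⟩
      simpa [Set.mem_preimage, rotA_rightinv] using hx
    · intro hy
      exact ⟨rotA (2 * π / 3) y, hy, rotA_leftinv _ y⟩
  rw [himg]
  refine hΩ.preimage_of_equiv (f := rotA (2 * π / 3))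
    (rotA_mp (2 * π / 3)).quasiMeasurePreserving
    (e := fun g => (⟨rotA (-(2 * π / 3)) ↑g, S_lat a0 _ g.2⟩ : ↥(lat a0))) ?_ ?_
  · rw [Function.bijective_iff_has_inverse]
    refine ⟨fun g => ⟨rotA (2 * π / 3) ↑g, T_lat a0 _ g.2⟩, fun g => ?_, fun g => ?_⟩
    · exact Subtype.ext (rotA_rightinv _ _)
    · exact Subtype.ext (rotA_leftinv _ _)
  · intro g x
    show rotA (2 * π / 3) (rotA (-(2 * π / 3)) ↑g + x) = ↑g + rotA (2 * π / 3) x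
    rw [rotA_add, rotA_rightinv]


def rotCLM (θ : ℝ) : Pt →L[ℝ] Pt := LinearMap.toContinuousLinearMap (rotL θ)

lemma rotCLM_apply (θ : ℝ) (v : Pt) : rotCLM θ v = rotA θ v := rotL_apply θ v

lemma expand_fderiv (f : Pt → ℂ) (w : Pt) (a b : ℝ) :
    (fderiv ℝ f w) (a, b)
      = (a : ℂ) * (fderiv ℝ f w) ((1 : ℝ), (0 : ℝ))
        + (b : ℂ) * (fderiv ℝ f w) ((0 : ℝ), (1 : ℝ)) := by
  have h : ((a, b) : Pt) = a • ((1 : ℝ), (0 : ℝ)) + b • ((0 : ℝ), (1 : ℝ)) := by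
    simp [Prod.smul_mk]
  rw [h, map_add, ContinuousLinearMap.map_smul, ContinuousLinearMap.map_smul,
    Complex.real_smul, Complex.real_smul]

lemma rot_deriv (Φ : Pt → ℝ → ℂ) (hd : ∀ z : ℝ, Differentiable ℝ (fun y => Φ y z))
    (μc : ℂ) (hμ : ∀ (x : Pt) (z : ℝ), Φ (rotA (-(2 * π / 3)) x) z = μc * Φ x z)
    (x : Pt) (z : ℝ) :
    dX1 Φ (rotA (-(2 * π / 3)) x) z
      = (Real.cos (2 * π / 3) : ℂ) * (μc * dX1 Φ x z)
        + (Real.sin (2 * π / 3) : ℂ) * (μc * dX2 Φ x z) ∧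
    dX2 Φ (rotA (-(2 * π / 3)) x) z
      = -(Real.sin (2 * π / 3) : ℂ) * (μc * dX1 Φ x z)
        + (Real.cos (2 * π / 3) : ℂ) * (μc * dX2 Φ x z) := by
  have hkey : (fderiv ℝ (fun y => Φ y z) (rotA (-(2 * π / 3)) x)).comp (rotCLM (-(2 * π / 3)))
      = μc • fderiv ℝ (fun y => Φ y z) x := by
    have h1 : (fun y : Pt => Φ (rotA (-(2 * π / 3)) y) z)
        = (fun y => Φ y z) ∘ (rotCLM (-(2 * π / 3))) := by
      funext y; simp [Function.comp, rotCLM_apply]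
    have h2 : (fun y : Pt => Φ (rotA (-(2 * π / 3)) y) z) = fun y => μc * Φ y z :=
      funext fun y => hμ y z
    have h3 := fderiv_comp (𝕜 := ℝ) x ((hd z) (rotCLM (-(2 * π / 3)) x))
      (rotCLM (-(2 * π / 3))).differentiableAt
    rw [ContinuousLinearMap.fderiv] at h3
    have h4 : fderiv ℝ ((fun y => Φ y z) ∘ (rotCLM (-(2 * π / 3)))) x
        = μc • fderiv ℝ (fun y => Φ y z) x := by
      rw [← h1, h2, fderiv_const_mul ((hd z) x)]
    rw [h4] at h3
    rw [show rotA (-(2 * π / 3)) x = rotCLM (-(2 * π / 3)) x from (rotCLM_apply _ _).symm]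
    exact h3.symm
  have k1 := congrArg (fun L : Pt →L[ℝ] ℂ => L ((1 : ℝ), (0 : ℝ))) hkey
  have k2 := congrArg (fun L : Pt →L[ℝ] ℂ => L ((0 : ℝ), (1 : ℝ))) hkey
  simp only [ContinuousLinearMap.comp_apply, ContinuousLinearMap.smul_apply] at k1 k2
  rw [rotCLM_apply] at k1 k2
  have hv1 : rotA (-(2 * π / 3)) ((1 : ℝ), (0 : ℝ))
      = (Real.cos (2 * π / 3), -Real.sin (2 * π / 3)) := by
    unfold rotA; rw [Real.cos_neg, Real.sin_neg]; exact Prod.ext (by ring) (by ring)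
  have hv2 : rotA (-(2 * π / 3)) ((0 : ℝ), (1 : ℝ))
      = (Real.sin (2 * π / 3), Real.cos (2 * π / 3)) := by
    unfold rotA; rw [Real.cos_neg, Real.sin_neg]; exact Prod.ext (by ring) (by ring)
  rw [hv1, expand_fderiv] at k1
  rw [hv2, expand_fderiv] at k2
  rw [smul_eq_mul] at k1 k2
  rw [Complex.ofReal_neg] at k1
  have pyth : (Real.cos (2 * π / 3) : ℂ) ^ 2 + (Real.sin (2 * π / 3) : ℂ) ^ 2 = 1 := by
    exact_mod_cast Real.cos_sq_add_sin_sq (2 * π / 3)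
  unfold dX1 dX2
  constructor
  · linear_combination (Real.cos (2 * π / 3) : ℂ) * k1 + (Real.sin (2 * π / 3) : ℂ) * k2
      - (fderiv ℝ (fun y => Φ y z) (rotA (-(2 * π / 3)) x) ((1 : ℝ), (0 : ℝ))) * pyth
  · linear_combination -(Real.sin (2 * π / 3) : ℂ) * k1 + (Real.cos (2 * π / 3) : ℂ) * k2
      - (fderiv ℝ (fun y => Φ y z) (rotA (-(2 * π / 3)) x) ((0 : ℝ), (1 : ℝ))) * pyth

lemma trans_deriv (Φ : Pt → ℝ → ℂ) (hd : ∀ z : ℝ, Differentiable ℝ (fun y => Φ y z))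
    (R : Pt) (e : ℂ) (he : ∀ (x : Pt) (z : ℝ), Φ (x + R) z = e * Φ x z) (x : Pt) (z : ℝ) :
    dX1 Φ (x + R) z = e * dX1 Φ x z ∧ dX2 Φ (x + R) z = e * dX2 Φ x z := by
  have hkey : fderiv ℝ (fun y => Φ y z) (x + R) = e • fderiv ℝ (fun y => Φ y z) x := by
    have h1 : (fun y : Pt => Φ (y + R) z) = fun y => e * Φ y z := funext fun y => he y z
    have h2 : (fun y : Pt => Φ (y + R) z) = (fun y => Φ y z) ∘ (fun y => y + R) := rfl
    have h3 := fderiv_comp (𝕜 := ℝ) x ((hd z) (x + R)) (differentiable_id.add_const R).differentiableAt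
    have h4 : fderiv ℝ (fun y : Pt => y + R) x = ContinuousLinearMap.id ℝ Pt := by
      have : (fun y : Pt => y + R) = fun y : Pt => id y + R := rfl
      rw [this, fderiv_add_const, fderiv_id]
    simp only [id_eq] at h3
    rw [h4, ContinuousLinearMap.comp_id] at h3
    rw [← h3, ← h2, h1, fderiv_const_mul ((hd z) x)]
  constructor
  · have := congrArg (fun L : Pt →L[ℝ] ℂ => L ((1 : ℝ), (0 : ℝ))) hkey
    simpa [dX1, ContinuousLinearMap.smul_apply, smul_eq_mul] using this
  · have := congrArg (fun L : Pt →L[ℝ] ℂ => L ((0 : ℝ), (1 : ℝ))) hkey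
    simpa [dX2, ContinuousLinearMap.smul_apply, smul_eq_mul] using this

lemma exp_unit (r : ℝ) :
    (starRingEnd ℂ) (Complex.exp (Complex.I * (r : ℂ))) * Complex.exp (Complex.I * (r : ℂ)) = 1 := by
  rw [← Complex.exp_conj, ← Complex.exp_add]
  have h : (starRingEnd ℂ) (Complex.I * (r : ℂ)) + Complex.I * (r : ℂ) = 0 := by
    rw [map_mul, Complex.conj_I, Complex.conj_ofReal]; ring
  rw [h, Complex.exp_zero]

lemma ωc_unit : (starRingEnd ℂ) ωc * ωc = 1 := by
  have h : ωc = Complex.exp (Complex.I * ((2 * π / 3 : ℝ) : ℂ)) := by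
    rw [ωc]; congr 1; push_cast; ring
  rw [h]; exact exp_unit _

lemma ωc_unit' : (starRingEnd ℂ) ((starRingEnd ℂ) ωc) * (starRingEnd ℂ) ωc = 1 := by
  rw [Complex.conj_conj, mul_comm]; exact ωc_unit

lemma main_zero (a0 : ℝ) (Ω : Set Pt) (hΩ : IsAddFundamentalDomain (lat a0) Ω volume)
    (g1 g2 : Pt × ℝ → ℂ)
    (hper1 : ∀ R ∈ lat a0, ∀ (x : Pt) (z : ℝ), g1 (x + R, z) = g1 (x, z))
    (hper2 : ∀ R ∈ lat a0, ∀ (x : Pt) (z : ℝ), g2 (x + R, z) = g2 (x, z))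
    (hrot1 : ∀ (x : Pt) (z : ℝ), g1 (rotA (-(2 * π / 3)) x, z)
        = -(1 / 2 : ℂ) * g1 (x, z) + ((Real.sqrt 3 : ℝ) : ℂ) / 2 * g2 (x, z))
    (hrot2 : ∀ (x : Pt) (z : ℝ), g2 (rotA (-(2 * π / 3)) x, z)
        = -((Real.sqrt 3 : ℝ) : ℂ) / 2 * g1 (x, z) - (1 / 2 : ℂ) * g2 (x, z))
    (hi1 : Integrable g1 (volume.restrict (Ω ×ˢ (Set.univ : Set ℝ))))
    (hi2 : Integrable g2 (volume.restrict (Ω ×ˢ (Set.univ : Set ℝ)))) :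
    (∫ p in Ω ×ˢ (Set.univ : Set ℝ), g1 p) = 0 ∧
    (∫ p in Ω ×ˢ (Set.univ : Set ℝ), g2 p) = 0 := by
  have hprod : volume.restrict (Ω ×ˢ (Set.univ : Set ℝ))
      = (volume.restrict Ω).prod (volume : Measure ℝ) := by
    conv_rhs => rw [← Measure.restrict_univ (μ := (volume : Measure ℝ))]
    rw [Measure.prod_restrict]
    rfl
  have hi1' : Integrable g1 ((volume.restrict Ω).prod (volume : Measure ℝ)) := by
    rw [← hprod]; exact hi1
  have hi2' : Integrable g2 ((volume.restrict Ω).prod (volume : Measure ℝ)) := by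
    rw [← hprod]; exact hi2
  have hI1 : (∫ p in Ω ×ˢ (Set.univ : Set ℝ), g1 p) = ∫ x in Ω, ∫ z, g1 (x, z) := by
    rw [show (∫ p in Ω ×ˢ (Set.univ : Set ℝ), g1 p)
        = ∫ p, g1 p ∂((volume.restrict Ω).prod (volume : Measure ℝ)) from by rw [← hprod]]
    exact integral_prod _ hi1'
  have hI2 : (∫ p in Ω ×ˢ (Set.univ : Set ℝ), g2 p) = ∫ x in Ω, ∫ z, g2 (x, z) := by
    rw [show (∫ p in Ω ×ˢ (Set.univ : Set ℝ), g2 p)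
        = ∫ p, g2 p ∂((volume.restrict Ω).prod (volume : Measure ℝ)) from by rw [← hprod]]
    exact integral_prod _ hi2'
  have hFD2 := FD_rot a0 Ω hΩ
  have hper1' : ∀ (g : ↥(lat a0)) (x : Pt),
      (fun x : Pt => ∫ z, g1 (x, z)) (g +ᵥ x) = (fun x : Pt => ∫ z, g1 (x, z)) x := by
    intro g x
    show (∫ z, g1 (↑g + x, z)) = ∫ z, g1 (x, z)
    have h : ∀ z : ℝ, g1 (↑g + x, z) = g1 (x, z) := fun z => by
      rw [add_comm]; exact hper1 ↑g g.2 x z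
    simp only [h]
  have hper2' : ∀ (g : ↥(lat a0)) (x : Pt),
      (fun x : Pt => ∫ z, g2 (x, z)) (g +ᵥ x) = (fun x : Pt => ∫ z, g2 (x, z)) x := by
    intro g x
    show (∫ z, g2 (↑g + x, z)) = ∫ z, g2 (x, z)
    have h : ∀ z : ℝ, g2 (↑g + x, z) = g2 (x, z) := fun z => by
      rw [add_comm]; exact hper2 ↑g g.2 x z
    simp only [h]
  have hstep1a : (∫ x in Ω, ∫ z, g1 (x, z))
      = ∫ x in rotA (-(2 * π / 3)) '' Ω, ∫ z, g1 (x, z) :=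
    hΩ.setIntegral_eq hFD2 hper1'
  have hstep2a : (∫ x in Ω, ∫ z, g2 (x, z))
      = ∫ x in rotA (-(2 * π / 3)) '' Ω, ∫ z, g2 (x, z) :=
    hΩ.setIntegral_eq hFD2 hper2'
  have hstep1b : (∫ x in rotA (-(2 * π / 3)) '' Ω, ∫ z, g1 (x, z))
      = ∫ x in Ω, ∫ z, g1 (rotA (-(2 * π / 3)) x, z) :=
    (rotA_mp (-(2 * π / 3))).setIntegral_image_emb (rotA_emb (-(2 * π / 3)))
      (fun y => ∫ z, g1 (y, z)) Ω
  have hstep2b : (∫ x in rotA (-(2 * π / 3)) '' Ω, ∫ z, g2 (x, z))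
      = ∫ x in Ω, ∫ z, g2 (rotA (-(2 * π / 3)) x, z) :=
    (rotA_mp (-(2 * π / 3))).setIntegral_image_emb (rotA_emb (-(2 * π / 3)))
      (fun y => ∫ z, g2 (y, z)) Ω
  have hae1 : ∀ᵐ x ∂(volume.restrict Ω), Integrable (fun z => g1 (x, z)) volume :=
    hi1'.prod_right_ae
  have hae2 : ∀ᵐ x ∂(volume.restrict Ω), Integrable (fun z => g2 (x, z)) volume :=
    hi2'.prod_right_ae
  have haeEq1 : (fun x : Pt => ∫ z, g1 (rotA (-(2 * π / 3)) x, z)) =ᵐ[volume.restrict Ω]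
      fun x : Pt => -(1 / 2 : ℂ) * (∫ z, g1 (x, z))
        + ((Real.sqrt 3 : ℝ) : ℂ) / 2 * (∫ z, g2 (x, z)) := by
    filter_upwards [hae1, hae2] with x hx1 hx2
    have h : ∀ z : ℝ, g1 (rotA (-(2 * π / 3)) x, z)
        = -(1 / 2 : ℂ) * g1 (x, z) + ((Real.sqrt 3 : ℝ) : ℂ) / 2 * g2 (x, z) := hrot1 x
    simp only [h]
    rw [integral_add (hx1.const_mul _) (hx2.const_mul _), integral_const_mul, integral_const_mul]
  have haeEq2 : (fun x : Pt => ∫ z, g2 (rotA (-(2 * π / 3)) x, z)) =ᵐ[volume.restrict Ω]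
      fun x : Pt => -((Real.sqrt 3 : ℝ) : ℂ) / 2 * (∫ z, g1 (x, z))
        - (1 / 2 : ℂ) * (∫ z, g2 (x, z)) := by
    filter_upwards [hae1, hae2] with x hx1 hx2
    have h : ∀ z : ℝ, g2 (rotA (-(2 * π / 3)) x, z)
        = -((Real.sqrt 3 : ℝ) : ℂ) / 2 * g1 (x, z) - (1 / 2 : ℂ) * g2 (x, z) := hrot2 x
    simp only [h]
    rw [integral_sub (hx1.const_mul _) (hx2.const_mul _), integral_const_mul, integral_const_mul]
  have hH1int : Integrable (fun x : Pt => ∫ z, g1 (x, z)) (volume.restrict Ω) :=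
    hi1'.integral_prod_left
  have hH2int : Integrable (fun x : Pt => ∫ z, g2 (x, z)) (volume.restrict Ω) :=
    hi2'.integral_prod_left
  set I1 : ℂ := ∫ x in Ω, ∫ z, g1 (x, z) with hI1def
  set I2 : ℂ := ∫ x in Ω, ∫ z, g2 (x, z) with hI2def
  have e1 : I1 = -(1 / 2 : ℂ) * I1 + ((Real.sqrt 3 : ℝ) : ℂ) / 2 * I2 := by
    calc I1 = ∫ x in Ω, ∫ z, g1 (rotA (-(2 * π / 3)) x, z) := by
            rw [hstep1a, hstep1b]
    _ = ∫ x in Ω, (-(1 / 2 : ℂ) * (∫ z, g1 (x, z))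
          + ((Real.sqrt 3 : ℝ) : ℂ) / 2 * (∫ z, g2 (x, z))) := integral_congr_ae haeEq1
    _ = -(1 / 2 : ℂ) * I1 + ((Real.sqrt 3 : ℝ) : ℂ) / 2 * I2 := by
          rw [integral_add (hH1int.const_mul _) (hH2int.const_mul _),
            integral_const_mul, integral_const_mul]
  have e2 : I2 = -((Real.sqrt 3 : ℝ) : ℂ) / 2 * I1 - (1 / 2 : ℂ) * I2 := by
    calc I2 = ∫ x in Ω, ∫ z, g2 (rotA (-(2 * π / 3)) x, z) := by
            rw [hstep2a, hstep2b]
    _ = ∫ x in Ω, (-((Real.sqrt 3 : ℝ) : ℂ) / 2 * (∫ z, g1 (x, z))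
          - (1 / 2 : ℂ) * (∫ z, g2 (x, z))) := integral_congr_ae haeEq2
    _ = -((Real.sqrt 3 : ℝ) : ℂ) / 2 * I1 - (1 / 2 : ℂ) * I2 := by
          rw [integral_sub (hH1int.const_mul _) (hH2int.const_mul _),
            integral_const_mul, integral_const_mul]
  have hs3 : ((Real.sqrt 3 : ℝ) : ℂ) ^ 2 = 3 := by exact_mod_cast sqrt3_sq
  have hz1 : I1 = 0 := by
    linear_combination (1 / 2 : ℂ) * e1 + (((Real.sqrt 3 : ℝ) : ℂ) / 6) * e2 - (I1 / 12) * hs3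
  have hz2 : I2 = 0 := by
    linear_combination (2 / 3 : ℂ) * e2 - (((Real.sqrt 3 : ℝ) : ℂ) / 3) * hz1
  exact ⟨hI1 ▸ hz1, hI2 ▸ hz2⟩

end S13


/-- if Φ(R_{2π/3}⁻¹ x, z) = ω Φ(x,z) (or with ω̄ instead of ω), then
∫_{Ω×ℝ} conj(Φ) (−i∇ₓΦ) = (0,0). -/
theorem stmt13 (a0 : ℝ) (ha0 : 0 < a0) (Ω : Set Pt)
    (hΩ : IsAddFundamentalDomain (lat a0) Ω volume)
    (Φ : Pt → ℝ → ℂ)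
    (hΦc : ContDiff ℝ 1 (fun p : Pt × ℝ => Φ p.1 p.2))
    (hΦq : KQuasiperiodic a0 Φ)
    (hΦ2 : MemLp (fun p : Pt × ℝ => Φ p.1 p.2) 2
      (volume.restrict (Ω ×ˢ (Set.univ : Set ℝ))))
    (hΦd1 : MemLp (fun p : Pt × ℝ => dX1 Φ p.1 p.2) 2
      (volume.restrict (Ω ×ˢ (Set.univ : Set ℝ))))
    (hΦd2 : MemLp (fun p : Pt × ℝ => dX2 Φ p.1 p.2) 2
      (volume.restrict (Ω ×ˢ (Set.univ : Set ℝ))))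
    (hsym : (∀ (x : Pt) (z : ℝ), Φ (rotA (-(2 * π / 3)) x) z = ωc * Φ x z) ∨
            (∀ (x : Pt) (z : ℝ), Φ (rotA (-(2 * π / 3)) x) z = (starRingEnd ℂ) ωc * Φ x z)) :
    (∫ p in Ω ×ˢ (Set.univ : Set ℝ),
        (starRingEnd ℂ) (Φ p.1 p.2) * (-Complex.I * dX1 Φ p.1 p.2)) = 0 ∧
    (∫ p in Ω ×ˢ (Set.univ : Set ℝ),
        (starRingEnd ℂ) (Φ p.1 p.2) * (-Complex.I * dX2 Φ p.1 p.2)) = 0 := by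
  classical
  obtain ⟨μc, hμ1, hμ⟩ : ∃ μc : ℂ, (starRingEnd ℂ) μc * μc = 1 ∧
      ∀ (x : Pt) (z : ℝ), Φ (rotA (-(2 * π / 3)) x) z = μc * Φ x z := by
    rcases hsym with h | h
    · exact ⟨ωc, S13.ωc_unit, h⟩
    · exact ⟨(starRingEnd ℂ) ωc, S13.ωc_unit', h⟩
  have hd : ∀ z : ℝ, Differentiable ℝ (fun y => Φ y z) := by
    intro z x
    have hbig := (hΦc.differentiable one_ne_zero) (x, z)
    have hin : DifferentiableAt ℝ (fun y : Pt => ((y, z) : Pt × ℝ)) x :=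
      differentiableAt_id.prodMk (differentiableAt_const z)
    exact hbig.comp x hin
  -- the two quadratic functionals
  set G1 : Pt × ℝ → ℂ := fun p => (starRingEnd ℂ) (Φ p.1 p.2) * dX1 Φ p.1 p.2 with hG1
  set G2 : Pt × ℝ → ℂ := fun p => (starRingEnd ℂ) (Φ p.1 p.2) * dX2 Φ p.1 p.2 with hG2
  have hper1 : ∀ R ∈ lat a0, ∀ (x : Pt) (z : ℝ), G1 (x + R, z) = G1 (x, z) := by
    intro R hR x z
    have he := hΦq R hR
    obtain ⟨h1, _⟩ := S13.trans_deriv Φ hd R _ he x z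
    have hce := S13.exp_unit (dot (Kpt a0) R)
    show (starRingEnd ℂ) (Φ (x + R) z) * dX1 Φ (x + R) z = (starRingEnd ℂ) (Φ x z) * dX1 Φ x z
    rw [he x z, h1, map_mul]
    linear_combination ((starRingEnd ℂ) (Φ x z) * dX1 Φ x z) * hce
  have hper2 : ∀ R ∈ lat a0, ∀ (x : Pt) (z : ℝ), G2 (x + R, z) = G2 (x, z) := by
    intro R hR x z
    have he := hΦq R hR
    obtain ⟨_, h2⟩ := S13.trans_deriv Φ hd R _ he x z
    have hce := S13.exp_unit (dot (Kpt a0) R)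
    show (starRingEnd ℂ) (Φ (x + R) z) * dX2 Φ (x + R) z = (starRingEnd ℂ) (Φ x z) * dX2 Φ x z
    rw [he x z, h2, map_mul]
    linear_combination ((starRingEnd ℂ) (Φ x z) * dX2 Φ x z) * hce
  have hcs : ((Real.cos (2 * π / 3) : ℝ) : ℂ) = -(1 / 2 : ℂ) := by
    rw [S13.cos23]; push_cast; ring
  have hss : ((Real.sin (2 * π / 3) : ℝ) : ℂ) = ((Real.sqrt 3 : ℝ) : ℂ) / 2 := by
    rw [S13.sin23]; push_cast; ring
  have hrot1 : ∀ (x : Pt) (z : ℝ), G1 (rotA (-(2 * π / 3)) x, z)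
      = -(1 / 2 : ℂ) * G1 (x, z) + ((Real.sqrt 3 : ℝ) : ℂ) / 2 * G2 (x, z) := by
    intro x z
    obtain ⟨h1, _⟩ := S13.rot_deriv Φ hd μc hμ x z
    show (starRingEnd ℂ) (Φ (rotA (-(2 * π / 3)) x) z) * dX1 Φ (rotA (-(2 * π / 3)) x) z = _
    rw [hμ x z, h1, map_mul, hcs, hss]
    show _ = -(1 / 2 : ℂ) * ((starRingEnd ℂ) (Φ x z) * dX1 Φ x z)
        + ((Real.sqrt 3 : ℝ) : ℂ) / 2 * ((starRingEnd ℂ) (Φ x z) * dX2 Φ x z)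
    linear_combination ((-(1 / 2 : ℂ) * dX1 Φ x z + ((Real.sqrt 3 : ℝ) : ℂ) / 2 * dX2 Φ x z)
      * (starRingEnd ℂ) (Φ x z)) * hμ1
  have hrot2 : ∀ (x : Pt) (z : ℝ), G2 (rotA (-(2 * π / 3)) x, z)
      = -((Real.sqrt 3 : ℝ) : ℂ) / 2 * G1 (x, z) - (1 / 2 : ℂ) * G2 (x, z) := by
    intro x z
    obtain ⟨_, h2⟩ := S13.rot_deriv Φ hd μc hμ x z
    show (starRingEnd ℂ) (Φ (rotA (-(2 * π / 3)) x) z) * dX2 Φ (rotA (-(2 * π / 3)) x) z = _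
    rw [hμ x z, h2, map_mul, hcs, hss]
    show _ = -((Real.sqrt 3 : ℝ) : ℂ) / 2 * ((starRingEnd ℂ) (Φ x z) * dX1 Φ x z)
        - (1 / 2 : ℂ) * ((starRingEnd ℂ) (Φ x z) * dX2 Φ x z)
    linear_combination ((-(((Real.sqrt 3 : ℝ) : ℂ)) / 2 * dX1 Φ x z - (1 / 2 : ℂ) * dX2 Φ x z)
      * (starRingEnd ℂ) (Φ x z)) * hμ1
  -- integrability
  have hconj : MemLp (fun p : Pt × ℝ => (starRingEnd ℂ) (Φ p.1 p.2)) 2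
      (volume.restrict (Ω ×ˢ (Set.univ : Set ℝ))) := by
    refine ⟨?_, ?_⟩
    · have := continuous_star.comp_aestronglyMeasurable (hΦ2.1)
      simp only [starRingEnd_apply]
      exact this
    · have hnorm : (fun p : Pt × ℝ => ‖(starRingEnd ℂ) (Φ p.1 p.2)‖)
          = fun p : Pt × ℝ => ‖Φ p.1 p.2‖ := funext fun p => by rw [RCLike.norm_conj]
      have h2 : eLpNorm (fun p : Pt × ℝ => (starRingEnd ℂ) (Φ p.1 p.2)) 2
            (volume.restrict (Ω ×ˢ (Set.univ : Set ℝ)))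
          = eLpNorm (fun p : Pt × ℝ => Φ p.1 p.2) 2
            (volume.restrict (Ω ×ˢ (Set.univ : Set ℝ))) := by
        rw [← eLpNorm_norm (fun p : Pt × ℝ => (starRingEnd ℂ) (Φ p.1 p.2)), hnorm, eLpNorm_norm]
      rw [h2]
      exact hΦ2.2
  have hpqr : (1 : ENNReal) / 1 = 1 / 2 + 1 / 2 := by
    have h22 : (2 : ENNReal) / 2 = 1 := ENNReal.div_self (by norm_num) (by norm_num)
    rw [ENNReal.div_add_div_same, one_div_one, show (1 : ENNReal) + 1 = 2 from one_add_one_eq_two, h22]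
  have hi1 : Integrable G1 (volume.restrict (Ω ×ˢ (Set.univ : Set ℝ))) := by
    have h := hΦd1.smul hconj (r := 1) (hpqr := ⟨by simpa only [one_div] using hpqr.symm⟩)
    rw [memLp_one_iff_integrable] at h
    have : G1 = (fun p : Pt × ℝ => (starRingEnd ℂ) (Φ p.1 p.2))
        • (fun p : Pt × ℝ => dX1 Φ p.1 p.2) := by
      funext p; simp [hG1, Pi.smul_apply', smul_eq_mul]
    rw [this]; exact h
  have hi2 : Integrable G2 (volume.restrict (Ω ×ˢ (Set.univ : Set ℝ))) := by
    have h := hΦd2.smul hconj (r := 1) (hpqr := ⟨by simpa only [one_div] using hpqr.symm⟩)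
    rw [memLp_one_iff_integrable] at h
    have : G2 = (fun p : Pt × ℝ => (starRingEnd ℂ) (Φ p.1 p.2))
        • (fun p : Pt × ℝ => dX2 Φ p.1 p.2) := by
      funext p; simp [hG2, Pi.smul_apply', smul_eq_mul]
    rw [this]; exact h
  obtain ⟨hz1, hz2⟩ := S13.main_zero a0 Ω hΩ G1 G2 hper1 hper2 hrot1 hrot2 hi1 hi2
  constructor
  · have : (∫ p in Ω ×ˢ (Set.univ : Set ℝ),
        (starRingEnd ℂ) (Φ p.1 p.2) * (-Complex.I * dX1 Φ p.1 p.2))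
        = ∫ p in Ω ×ˢ (Set.univ : Set ℝ), -Complex.I * G1 p :=
      integral_congr_ae (Filter.Eventually.of_forall fun p => by simp only [hG1]; ring)
    rw [this, MeasureTheory.integral_const_mul, hz1, mul_zero]
  · have : (∫ p in Ω ×ˢ (Set.univ : Set ℝ),
        (starRingEnd ℂ) (Φ p.1 p.2) * (-Complex.I * dX2 Φ p.1 p.2))
        = ∫ p in Ω ×ˢ (Set.univ : Set ℝ), -Complex.I * G2 p :=
      integral_congr_ae (Filter.Eventually.of_forall fun p => by simp only [hG2]; ring)
    rw [this, MeasureTheory.integral_const_mul, hz2, mul_zero]
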